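/- arXiv:2205.15174 — 2 statements merged into one kernel-verified Lean document; each statement's English description precedes it below -/
import Mathlib

section
/- Let S := B(0, π^{-1/2}) ⊂ ℝ² be the open disc of unit area centered at the origin, and define w : ℝ² → ℝ², w(x) := (x₂, −x₁)/√2. Then ∫_S ‖w(x)‖² dx = 1/(4π), and for every continuously differentiable α : ℝ² → ℝ, ∫_S ‖∇α(x) + w(x)‖² dx ≥ 1/(4π). -/
open MeasureTheory Metric Real

noncomputable abbrev E2 := EuclideanSpace ℝ (Fin 2)

noncomputable def e2 : ℂ ≃ₗᵢ[ℝ] E2 :=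
  Complex.isometryOfOrthonormal (EuclideanSpace.basisFun (Fin 2) ℝ)

lemma e2_apply (z : ℂ) : e2 z = (WithLp.equiv 2 (Fin 2 → ℝ)).symm ![z.re, z.im] := by
  rw [e2, Complex.isometryOfOrthonormal_apply]
  ext i
  fin_cases i <;>
    simp [EuclideanSpace.basisFun_apply, EuclideanSpace.single_apply]

lemma e2_symm_apply (x : E2) : e2.symm x = Complex.mk (x 0) (x 1) := by
  rw [e2, Complex.isometryOfOrthonormal_symm_apply]
  simp [EuclideanSpace.basisFun_apply, Complex.ext_iff, PiLp.inner_apply,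
    EuclideanSpace.single_apply, Fin.sum_univ_two]

noncomputable def rot (θ : ℝ) : E2 ≃ₗᵢ[ℝ] E2 :=
  e2.symm.trans ((rotation (Circle.exp θ)).trans e2)

lemma rot_apply (θ : ℝ) (x : E2) :
    rot θ x = e2 (Complex.exp (θ * Complex.I) * e2.symm x) := by
  simp [rot, rotation_apply, Circle.coe_exp]

lemma rot_image_ball (θ : ℝ) (R : ℝ) : rot θ '' ball (0 : E2) R = ball 0 R := by
  rw [LinearIsometryEquiv.image_ball, map_zero]

lemma setIntegral_rot (θ : ℝ) (R : ℝ) (α : E2 → ℝ) :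
    ∫ x in ball (0 : E2) R, α (rot θ x) = ∫ x in ball (0 : E2) R, α x := by
  conv_rhs => rw [← rot_image_ball θ R]
  rw [(rot θ).measurePreserving.setIntegral_image_emb
      (rot θ).toHomeomorph.measurableEmbedding α _]

lemma integral_deriv_rot_zero (R : ℝ) (α : E2 → ℝ) (hα : ContDiff ℝ 1 α) :
    ∫ x in ball (0 : E2) R, (fderiv ℝ α x) (e2 (Complex.I * e2.symm x)) = 0 := by
  rcases le_or_gt R 0 with hR | hR
  · rw [Metric.ball_eq_empty.mpr hR]; simp
  obtain ⟨M, hM⟩ := (isCompact_closedBall (0 : E2) R).exists_bound_of_continuousOn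
    (hα.continuous_fderiv one_ne_zero).continuousOn
  set F : ℝ → E2 → ℝ := fun θ x => α (e2 (Complex.exp (θ * Complex.I) * e2.symm x)) with hF
  set F' : ℝ → E2 → ℝ := fun θ x =>
    (fderiv ℝ α (e2 (Complex.exp (θ * Complex.I) * e2.symm x)))
      (e2 (Complex.exp (θ * Complex.I) * (1 * Complex.I) * e2.symm x)) with hF'
  have hcont : ∀ θ : ℝ, Continuous (fun x : E2 => e2 (Complex.exp (θ * Complex.I) * e2.symm x)) :=
    fun θ => e2.continuous.comp (continuous_const.mul e2.symm.continuous)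
  have hnorm : ∀ θ : ℝ, ∀ x : E2, ‖e2 (Complex.exp (θ * Complex.I) * e2.symm x)‖ = ‖x‖ := by
    intro θ x
    rw [e2.norm_map, norm_mul, Complex.norm_exp_ofReal_mul_I, one_mul, e2.symm.norm_map]
  have key : HasDerivAt (fun θ : ℝ => ∫ x in ball (0 : E2) R, F θ x)
      (∫ x in ball (0 : E2) R, F' 0 x) 0 := by
    refine (hasDerivAt_integral_of_dominated_loc_of_deriv_le (F := F) (F' := F')
      (bound := fun _ => M * R) (ball_mem_nhds 0 one_pos) ?_ ?_ ?_ ?_ ?_ ?_).2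
    · filter_upwards with θ
      exact ((hα.continuous.comp (hcont θ)).aestronglyMeasurable).restrict
    · refine ((hα.continuous.comp (hcont 0)).continuousOn.integrableOn_compact
        (isCompact_closedBall (0 : E2) R)).mono_set ball_subset_closedBall
    · refine Continuous.aestronglyMeasurable ?_ |>.restrict
      exact ((hα.continuous_fderiv one_ne_zero).comp (hcont 0)).clm_apply
        (e2.continuous.comp (continuous_const.mul e2.symm.continuous))
    · filter_upwards [ae_restrict_mem measurableSet_ball] with x hx θ _
      have hx' : ‖x‖ < R := by simpa [mem_ball_zero_iff] using hx
      calc ‖F' θ x‖ ≤ ‖fderiv ℝ α (e2 (Complex.exp (θ * Complex.I) * e2.symm x))‖ *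
            ‖e2 (Complex.exp (θ * Complex.I) * (1 * Complex.I) * e2.symm x)‖ :=
          ContinuousLinearMap.le_opNorm _ _
        _ ≤ M * R := by
          have hy : e2 (Complex.exp (θ * Complex.I) * e2.symm x) ∈ closedBall (0 : E2) R := by
            rw [mem_closedBall_zero_iff, hnorm]; exact hx'.le
          refine mul_le_mul (hM _ hy) ?_ (norm_nonneg _) ((norm_nonneg _).trans (hM _ hy))
          rw [e2.norm_map, norm_mul, norm_mul,
            Complex.norm_exp_ofReal_mul_I, e2.symm.norm_map]
          simpa using hx'.le
    · exact integrableOn_const measure_ball_lt_top.ne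
    · filter_upwards with x θ _
      have h1 : HasDerivAt (fun θ : ℝ => (θ : ℂ) * Complex.I) (1 * Complex.I) θ :=
        (Complex.ofRealCLM.hasDerivAt (x := θ)).mul_const Complex.I
      have h2 := h1.cexp
      have h3 := h2.mul_const (e2.symm x)
      have h4 := (e2.toContinuousLinearEquiv.hasFDerivAt).comp_hasDerivAt θ h3
      have h5 := ((hα.differentiable one_ne_zero).differentiableAt.hasFDerivAt).comp_hasDerivAt θ h4
      simpa [hF, hF', Function.comp_def, mul_comm, mul_assoc, mul_left_comm] using h5
  have hconst : (fun θ : ℝ => ∫ x in ball (0 : E2) R, F θ x) =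
      fun _ : ℝ => ∫ x in ball (0 : E2) R, α x := by
    funext θ
    have := setIntegral_rot θ R α
    simpa [rot_apply] using this
  have h0 : HasDerivAt (fun θ : ℝ => ∫ x in ball (0 : E2) R, F θ x) 0 0 := by
    rw [hconst]; exact hasDerivAt_const _ _
  have := key.unique h0
  rw [← this]
  refine setIntegral_congr_fun measurableSet_ball fun x _ => ?_
  simp [hF', Complex.exp_zero]

lemma coord_norm_sq (x : E2) : ‖x‖ ^ 2 = x 0 ^ 2 + x 1 ^ 2 := by
  rw [EuclideanSpace.norm_eq, sq_sqrt (by positivity)]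
  simp [Fin.sum_univ_two, sq_abs]

lemma norm_w_sq (x : E2) :
    ‖(WithLp.equiv 2 (Fin 2 → ℝ)).symm ![x 1 / Real.sqrt 2, -(x 0) / Real.sqrt 2]‖ ^ 2
      = ‖x‖ ^ 2 / 2 := by
  rw [coord_norm_sq, coord_norm_sq]
  have h0 : ((WithLp.equiv 2 (Fin 2 → ℝ)).symm ![x 1 / Real.sqrt 2, -(x 0) / Real.sqrt 2]) 0
      = x 1 / Real.sqrt 2 := rfl
  have h1 : ((WithLp.equiv 2 (Fin 2 → ℝ)).symm ![x 1 / Real.sqrt 2, -(x 0) / Real.sqrt 2]) 1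
      = -(x 0) / Real.sqrt 2 := rfl
  rw [h0, h1, div_pow, div_pow, sq_sqrt (by norm_num : (2:ℝ) ≥ 0)]
  ring

lemma integral_norm_sq_ball {R : ℝ} (hR : 0 ≤ R) :
    ∫ x in ball (0 : E2) R, ‖x‖ ^ 2 = π * R ^ 4 / 2 := by
  have hvol : (volume (ball (0 : E2) 1)).toReal = π := by
    rw [EuclideanSpace.volume_ball]
    simp only [Fintype.card_fin]
    rw [Nat.cast_ofNat, div_self (two_ne_zero), one_add_one_eq_two, Real.Gamma_two,
      sq_sqrt pi_pos.le]
    simp [ENNReal.toReal_mul, ENNReal.toReal_ofReal pi_pos.le]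
  have hdim : Module.finrank ℝ E2 = 2 := finrank_euclideanSpace_fin
  set f : ℝ → ℝ := (Set.Iio R).indicator (fun y => y ^ 2) with hf
  have h1 : ∫ x in ball (0 : E2) R, ‖x‖ ^ 2 = ∫ x : E2, f ‖x‖ := by
    rw [← integral_indicator measurableSet_ball]
    refine integral_congr_ae (Filter.Eventually.of_forall fun x => ?_)
    simp only [hf, Set.indicator_apply, Set.mem_Iio]
    rcases lt_or_ge ‖x‖ R with h | h
    · rw [Set.indicator_of_mem (mem_ball_zero_iff.mpr h), if_pos h]
    · rw [Set.indicator_of_notMem (fun hc => absurd (mem_ball_zero_iff.mp hc) (not_lt.mpr h)),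
        if_neg (not_lt.mpr h)]
  rw [h1, integral_fun_norm_addHaar volume f, hdim, measureReal_def, hvol]
  have h2 : ∫ y in Set.Ioi (0:ℝ), y ^ (2 - 1) • f y = R ^ 4 / 4 := by
    have : ∀ y : ℝ, y ^ (2-1) • f y = (Set.Iio R).indicator (fun y => y ^ 3) y * 1 := by
      intro y
      by_cases hy : y ∈ Set.Iio R <;>
        simp [hf, Set.indicator_of_mem, Set.indicator_of_notMem, hy, smul_eq_mul] <;> ring
    simp_rw [this, mul_one]
    rw [integral_indicator measurableSet_Iio, Measure.restrict_restrict measurableSet_Iio,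
      Set.Iio_inter_Ioi, ← integral_Ioc_eq_integral_Ioo, ← intervalIntegral.integral_of_le hR]
    simp [integral_pow]
    ring
  rw [h2]
  simp only [nsmul_eq_mul, smul_eq_mul, Nat.cast_ofNat]
  ring

lemma part1 {R : ℝ} (hR : 0 ≤ R) :
    (∫ x in ball (0 : E2) R,
        ‖(WithLp.equiv 2 (Fin 2 → ℝ)).symm ![x 1 / Real.sqrt 2, -(x 0) / Real.sqrt 2]‖ ^ 2)
      = π * R ^ 4 / 4 := by
  have : ∀ x : E2,
      ‖(WithLp.equiv 2 (Fin 2 → ℝ)).symm ![x 1 / Real.sqrt 2, -(x 0) / Real.sqrt 2]‖ ^ 2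
        = ‖x‖ ^ 2 * (1/2) := fun x => by rw [norm_w_sq]; ring
  simp_rw [this]
  rw [integral_mul_const, integral_norm_sq_ball hR]
  ring

open scoped RealInnerProductSpace

lemma v_coords (x : E2) :
    e2 (Complex.I * e2.symm x) = (WithLp.equiv 2 (Fin 2 → ℝ)).symm ![-(x 1), x 0] := by
  rw [e2_symm_apply, e2_apply]
  have hre : (Complex.I * Complex.mk (x 0) (x 1)).re = -(x 1) := by
    simp [Complex.mul_re]
  have him : (Complex.I * Complex.mk (x 0) (x 1)).im = x 0 := by
    simp [Complex.mul_im]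
  rw [hre, him]

lemma w_eq_smul_v (x : E2) :
    (WithLp.equiv 2 (Fin 2 → ℝ)).symm ![x 1 / Real.sqrt 2, -(x 0) / Real.sqrt 2]
      = (-(Real.sqrt 2)⁻¹) • e2 (Complex.I * e2.symm x) := by
  rw [v_coords]
  ext i
  fin_cases i <;>
    · show _ = (-(Real.sqrt 2)⁻¹) * _
      simp [div_eq_mul_inv]
      ring

lemma gradient_inner_eq (α : E2 → ℝ) (x v : E2) :
    ⟪gradient α x, v⟫ = (fderiv ℝ α x) v := by
  rw [gradient, InnerProductSpace.toDual_symm_apply]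

/-- For the disc `S = B(0, π^{-1/2})` of unit area and
`w(x) = (x₂, −x₁)/√2`, one has `∫_S ‖w‖² = 1/(4π)` and for every `C¹` function
`α : ℝ² → ℝ`, `∫_S ‖∇α + w‖² ≥ 1/(4π)`. -/
theorem torsion_constant_disc :
    (∫ x in Metric.ball (0 : EuclideanSpace ℝ (Fin 2)) (Real.pi ^ (-(1/2) : ℝ)),
        ‖(WithLp.equiv 2 (Fin 2 → ℝ)).symm
            ![x 1 / Real.sqrt 2, -(x 0) / Real.sqrt 2]‖ ^ 2) = 1 / (4 * Real.pi) ∧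
    ∀ α : EuclideanSpace ℝ (Fin 2) → ℝ, ContDiff ℝ 1 α →
      1 / (4 * Real.pi) ≤
        ∫ x in Metric.ball (0 : EuclideanSpace ℝ (Fin 2)) (Real.pi ^ (-(1/2) : ℝ)),
          ‖gradient α x + (WithLp.equiv 2 (Fin 2 → ℝ)).symm
              ![x 1 / Real.sqrt 2, -(x 0) / Real.sqrt 2]‖ ^ 2 := by
  set R : ℝ := Real.pi ^ (-(1/2) : ℝ) with hRdef
  have hR : 0 < R := Real.rpow_pos_of_pos pi_pos _
  have hR4 : R ^ 4 = (π ^ 2)⁻¹ := by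
    rw [hRdef, ← Real.rpow_natCast (π ^ (-(1/2) : ℝ)) 4, ← Real.rpow_mul pi_pos.le]
    norm_num
  have hpart1 : (∫ x in ball (0 : E2) R,
      ‖(WithLp.equiv 2 (Fin 2 → ℝ)).symm ![x 1 / Real.sqrt 2, -(x 0) / Real.sqrt 2]‖ ^ 2)
        = 1 / (4 * π) := by
    rw [part1 hR.le, hR4]
    field_simp
  refine ⟨hpart1, fun α hα => ?_⟩
  set c : ℝ := -(Real.sqrt 2)⁻¹ with hc
  set v : E2 → E2 := fun x => e2 (Complex.I * e2.symm x) with hv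
  have hvcont : Continuous v := e2.continuous.comp (continuous_const.mul e2.symm.continuous)
  have hgradcont : Continuous (gradient α) := by
    have : gradient α = fun x => (InnerProductSpace.toDual ℝ E2).symm (fderiv ℝ α x) := rfl
    rw [this]
    exact (LinearIsometryEquiv.continuous _).comp (hα.continuous_fderiv one_ne_zero)
  have integ : ∀ f : E2 → ℝ, Continuous f → IntegrableOn f (ball (0 : E2) R) volume :=
    fun f hf => (hf.continuousOn.integrableOn_compact
      (isCompact_closedBall (0 : E2) R)).mono_set ball_subset_closedBall
  have hinner0 : ∫ x in ball (0 : E2) R, ⟪gradient α x, v x⟫ = 0 := by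
    have := integral_deriv_rot_zero R α hα
    rw [← this]
    exact setIntegral_congr_fun measurableSet_ball fun x _ => gradient_inner_eq α x (v x)
  have hsplit : ∀ x : E2,
      ‖gradient α x + (WithLp.equiv 2 (Fin 2 → ℝ)).symm
          ![x 1 / Real.sqrt 2, -(x 0) / Real.sqrt 2]‖ ^ 2
        = ‖gradient α x‖ ^ 2 + (2 * c) * ⟪gradient α x, v x⟫
          + ‖(WithLp.equiv 2 (Fin 2 → ℝ)).symm
              ![x 1 / Real.sqrt 2, -(x 0) / Real.sqrt 2]‖ ^ 2 := by
    intro x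
    conv_lhs => rw [w_eq_smul_v]
    conv_rhs => rw [w_eq_smul_v]
    rw [norm_add_sq_real, real_inner_smul_right]
    ring
  rw [setIntegral_congr_fun measurableSet_ball fun x _ => hsplit x]
  have iA : IntegrableOn (fun x => ‖gradient α x‖ ^ 2) (ball (0 : E2) R) volume :=
    integ _ ((hgradcont.norm).pow 2)
  have iB := integ (fun x => (2 * c) * ⟪gradient α x, v x⟫)
    (continuous_const.mul (hgradcont.inner hvcont))
  have iC : IntegrableOn (fun x : E2 =>
      ‖(WithLp.equiv 2 (Fin 2 → ℝ)).symm ![x 1 / Real.sqrt 2, -(x 0) / Real.sqrt 2]‖ ^ 2)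
      (ball (0 : E2) R) volume := by
    refine integ _ ?_
    have : Continuous fun x : E2 => (WithLp.equiv 2 (Fin 2 → ℝ)).symm
        ![x 1 / Real.sqrt 2, -(x 0) / Real.sqrt 2] := by
      have : (fun x : E2 => (WithLp.equiv 2 (Fin 2 → ℝ)).symm
          ![x 1 / Real.sqrt 2, -(x 0) / Real.sqrt 2]) = fun x => c • v x := by
        funext x; rw [w_eq_smul_v]
      rw [this]
      exact hvcont.const_smul c
    exact (this.norm).pow 2
  have iAB : IntegrableOn (fun x : E2 =>
      ‖gradient α x‖ ^ 2 + (2 * c) * ⟪gradient α x, v x⟫) (ball (0 : E2) R) volume :=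
    iA.add iB
  rw [integral_add iAB iC, integral_add iA iB]
  have hB : ∫ x in ball (0 : E2) R, (2 * c) * ⟪gradient α x, v x⟫ = 0 := by
    rw [integral_const_mul, hinner0, mul_zero]
  rw [hB, hpart1, add_zero]
  have hA : 0 ≤ ∫ x in ball (0 : E2) R, ‖gradient α x‖ ^ 2 :=
    setIntegral_nonneg measurableSet_ball fun x _ => by positivity
  linarith
end

section
/- Let λ ≥ 0, μ > 0, set c := λ/(4√2(λ+μ)) and define φ : ℝ² → ℝ³ by φ(x₂, x₃) := −c · (0, x₂² − x₃², 2 x₂ x₃)ᵀ. For x ∈ ℝ² let A(x) ∈ ℝ^{3×3} be the matrix whose first column is zero and whose second and third columns are the partial derivatives ∂₂φ(x) and ∂₃φ(x), respectively. Then for every x = (x₂, x₃) ∈ ℝ², (x₂/√2) e₁ e₁ᵀ + (A(x) + A(x)ᵀ)/2 = (x₂/√2) · diag(1, −λ/(2(λ+μ)), −λ/(2(λ+μ))). -/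
open Matrix

lemma deriv_phi_fst (c b : ℝ) (a : ℝ) :
    deriv (fun s : ℝ => (-c) • ![(0:ℝ), s ^ 2 - b ^ 2, 2 * s * b]) a
      = (-c) • ![(0:ℝ), 2 * a, 2 * b] := by
  have h : HasDerivAt (fun s : ℝ => (-c) • ![(0:ℝ), s ^ 2 - b ^ 2, 2 * s * b])
      ((-c) • ![(0:ℝ), 2 * a, 2 * b]) a := by
    rw [hasDerivAt_pi]
    intro i
    fin_cases i
    · show HasDerivAt (fun s : ℝ => -c * 0) (-c * 0) a
      simpa using hasDerivAt_const a ((-c) * 0)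
    · show HasDerivAt (fun s : ℝ => -c * (s ^ 2 - b ^ 2)) (-c * (2 * a)) a
      have := ((hasDerivAt_pow 2 a).sub_const (b ^ 2)).const_mul (-c)
      exact this.congr_deriv (by norm_num)
    · show HasDerivAt (fun s : ℝ => -c * (2 * s * b)) (-c * (2 * b)) a
      have h2 : (fun s : ℝ => -c * (2 * s * b)) = fun s : ℝ => (-c * (2 * b)) * id s := by
        funext s; simp; ring
      rw [h2]
      simpa using ((hasDerivAt_id a).const_mul (-c * (2 * b)))
  exact h.deriv

lemma deriv_phi_snd (c a : ℝ) (b : ℝ) :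
    deriv (fun s : ℝ => (-c) • ![(0:ℝ), a ^ 2 - s ^ 2, 2 * a * s]) b
      = (-c) • ![(0:ℝ), -(2 * b), 2 * a] := by
  have h : HasDerivAt (fun s : ℝ => (-c) • ![(0:ℝ), a ^ 2 - s ^ 2, 2 * a * s])
      ((-c) • ![(0:ℝ), -(2 * b), 2 * a]) b := by
    rw [hasDerivAt_pi]
    intro i
    fin_cases i
    · show HasDerivAt (fun s : ℝ => -c * 0) (-c * 0) b
      simpa using hasDerivAt_const b ((-c) * 0)
    · show HasDerivAt (fun s : ℝ => -c * (a ^ 2 - s ^ 2)) (-c * -(2 * b)) b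
      have := ((hasDerivAt_const b (a ^ 2)).sub (hasDerivAt_pow 2 b)).const_mul (-c)
      exact this.congr_deriv (by norm_num)
    · show HasDerivAt (fun s : ℝ => -c * (2 * a * s)) (-c * (2 * a)) b
      have h2 : (fun s : ℝ => -c * (2 * a * s)) = fun s : ℝ => (-c * (2 * a)) * id s := by
        funext s; simp; ring
      rw [h2]
      simpa using ((hasDerivAt_id b).const_mul (-c * (2 * a)))
  exact h.deriv

/-- The explicit polynomial corrector
`φ(x₂,x₃) = −(λ/(4√2(λ+μ))) (0, x₂²−x₃², 2x₂x₃)ᵀ` relaxes the bending strain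
`(x₂/√2) e₁e₁ᵀ` to the diagonal strain `(x₂/√2)·diag(1, −λ/(2(λ+μ)), −λ/(2(λ+μ)))`:
`(x₂/√2) e₁e₁ᵀ + sym A = (x₂/√2) diag(1, −λ/(2(λ+μ)), −λ/(2(λ+μ)))`, where the
columns of `A` are `0`, `∂₂φ` and `∂₃φ`. -/
theorem bending_corrector_identity (lam mu : ℝ) (hlam : 0 ≤ lam) (hmu : 0 < mu)
    (x₂ x₃ : ℝ) :
    let c : ℝ := lam / (4 * Real.sqrt 2 * (lam + mu))
    let φ : ℝ → ℝ → (Fin 3 → ℝ) := fun a b => (-c) • ![0, a ^ 2 - b ^ 2, 2 * a * b]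
    let A : Matrix (Fin 3) (Fin 3) ℝ := Matrix.of fun i j =>
      ![(0 : Fin 3 → ℝ), deriv (fun s => φ s x₃) x₂, deriv (fun s => φ x₂ s) x₃] j i
    (x₂ / Real.sqrt 2) • Matrix.vecMulVec ![(1:ℝ), 0, 0] ![(1:ℝ), 0, 0] +
        (1/2 : ℝ) • (A + Aᵀ) =
      (x₂ / Real.sqrt 2) •
        Matrix.diagonal ![1, -lam / (2 * (lam + mu)), -lam / (2 * (lam + mu))] := by
  intro c φ A
  have hA1 : deriv (fun s => φ s x₃) x₂ = (-c) • ![(0:ℝ), 2 * x₂, 2 * x₃] :=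
    deriv_phi_fst c x₃ x₂
  have hA2 : deriv (fun s => φ x₂ s) x₃ = (-c) • ![(0:ℝ), -(2 * x₃), 2 * x₂] :=
    deriv_phi_snd c x₂ x₃
  have hsum : lam + mu ≠ 0 := by positivity
  have hs2 : Real.sqrt 2 ≠ 0 := by positivity
  have hc : c = lam / (4 * Real.sqrt 2 * (lam + mu)) := rfl
  ext i j
  fin_cases i <;> fin_cases j <;>
    simp [A, hA1, hA2, Matrix.vecMulVec, Matrix.diagonal, hc, Matrix.add_apply,
      Matrix.smul_apply, Matrix.transpose_apply, Matrix.vecHead, Matrix.vecTail] <;>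
    (try field_simp) <;> ring
end
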